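/- Let b ≥ 1 and h ≥ 3. Define g_h = (h-1)(b+2) and opt_h = (h-2)(b+2) + ∑_{i=0}^{h-1} (b+1)^i. Then the ratio opt_h / g_h tends to infinity as h tends to infinity. -/

import Mathlib

lemma sq_le_two_pow : ∀ n : ℕ, 4 ≤ n → n ^ 2 ≤ 2 ^ n := by
  intro n hn
  induction n with
  | zero => omega
  | succ m ih =>
    rcases Nat.lt_or_ge m 4 with h4 | h4
    · interval_cases m <;> simp_all
    · have h1 := ih h4
      have h2 : 2 * m + 1 ≤ m ^ 2 := by nlinarith
      calc (m + 1) ^ 2 = m ^ 2 + (2 * m + 1) := by ring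
        _ ≤ 2 ^ m + 2 ^ m := by omega
        _ = 2 ^ (m + 1) := by ring

/-- For `b ≥ 1`, with `g_h = (h-1)(b+2)` (the number of vertices saved by the degree-greedy
strategy) and `opt_h = (h-2)(b+2) + ∑_{i=0}^{h-1} (b+1)^i` (the number saved by an optimal
strategy), the ratio `opt_h / g_h` tends to infinity as `h → ∞`. -/
theorem stmt4 (b : ℕ) (hb : 1 ≤ b) :
    Filter.Tendsto
      (fun h : ℕ =>
        (((h - 2) * (b + 2) + ∑ i ∈ Finset.range h, (b + 1) ^ i : ℕ) : ℝ) /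
          (((h - 1) * (b + 2) : ℕ) : ℝ))
      Filter.atTop Filter.atTop := by
  have h1 : Filter.Tendsto (fun h : ℕ => ((h : ℝ) - 1) / (b + 2)) Filter.atTop Filter.atTop := by
    apply Filter.Tendsto.atTop_div_const (by positivity)
    exact Filter.tendsto_atTop_add_const_right _ _ tendsto_natCast_atTop_atTop
  apply Filter.tendsto_atTop_mono' _ _ h1
  filter_upwards [Filter.eventually_ge_atTop 5] with h hh
  have hN : ((h - 1) ^ 2 : ℕ) ≤ (h - 2) * (b + 2) + ∑ i ∈ Finset.range h, (b + 1) ^ i := by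
    have hs : (b + 1) ^ (h - 1) ≤ ∑ i ∈ Finset.range h, (b + 1) ^ i :=
      Finset.single_le_sum (fun i _ => Nat.zero_le _) (Finset.mem_range.mpr (by omega))
    have h2 : 2 ^ (h - 1) ≤ (b + 1) ^ (h - 1) := Nat.pow_le_pow_left (by omega) _
    have h3 : (h - 1) ^ 2 ≤ 2 ^ (h - 1) := sq_le_two_pow _ (by omega)
    omega
  have hD : (0 : ℝ) < (((h - 1) * (b + 2) : ℕ) : ℝ) := by
    exact_mod_cast Nat.mul_pos (by omega) (by omega)
  rw [div_le_div_iff₀ (by positivity) hD]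
  have hh1 : ((h - 1 : ℕ) : ℝ) = (h : ℝ) - 1 := by
    push_cast [Nat.cast_sub (by omega : 1 ≤ h)]; ring
  have hN' : (((h - 1) ^ 2 : ℕ) : ℝ) ≤
      (((h - 2) * (b + 2) + ∑ i ∈ Finset.range h, (b + 1) ^ i : ℕ) : ℝ) := by
    exact_mod_cast hN
  push_cast [hh1] at hN' ⊢
  nlinarith [hN']
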